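/- Fix ξ ∈ ℝ, let α = ξ and ν = ξ², and let u be a normalized (α,ξ,ν)-eigenfunction. Then ∫₀^∞ (C_ξ u)(t) u(t) dt = 0. -/

import Mathlib

open MeasureTheory

/-- An `(α,ξ,ν)`-eigenfunction: a smooth function on `ℝ` which, together with all its
derivatives, decays faster than any polynomial on `[0,∞)`, solves
`−u'' + ((ξ−t)² + 1)u = νu` on `[0,∞)`, and satisfies the Robin condition
`u'(0) = (α−ξ)u(0)`. -/
def IsEigen (α ξ ν : ℝ) (u : ℝ → ℝ) : Prop :=
  ContDiff ℝ (⊤ : ℕ∞) u ∧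
  (∀ n k : ℕ, ∃ C : ℝ, ∀ t : ℝ, 0 ≤ t → |t| ^ k * |iteratedDeriv n u t| ≤ C) ∧
  (∀ t : ℝ, 0 ≤ t → -(deriv (deriv u) t) + ((ξ - t) ^ 2 + 1) * u t = ν * u t) ∧
  deriv u 0 = (α - ξ) * u 0

/-- The operator `C_ξ w = 2( t·(n₀w) − ξw − w' + t²(ξ−t)w )`, where
`(n₀w)(t) = −w''(t) + ((ξ−t)² + 1)w(t)`. -/
noncomputable def Cxi (ξ : ℝ) (w : ℝ → ℝ) (t : ℝ) : ℝ :=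
  2 * (t * (-(deriv (deriv w) t) + ((ξ - t) ^ 2 + 1) * w t)
    - ξ * w t - deriv w t + t ^ 2 * (ξ - t) * w t)

/-- Auxiliary antiderivative: `G = a u² + b u u' + c u'²`. -/
noncomputable def Gaux (ξ : ℝ) (u : ℝ → ℝ) (t : ℝ) : ℝ :=
  (-2/3 - (t^2 + ξ*t - 2) * (t^2 - 2*ξ*t + 1)/3) * u t ^ 2
  + (-(2*t + ξ)/3) * (u t * deriv u t)
  + ((t^2 + ξ*t - 2)/3) * deriv u t ^ 2

lemma aux_tendsto (K : ℝ) (m : ℕ) (v w : ℝ → ℝ)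
    (hv : ∀ k : ℕ, ∃ C, ∀ t : ℝ, 0 ≤ t → t ^ k * |v t| ≤ C)
    (hw : ∃ C, ∀ t : ℝ, 0 ≤ t → |w t| ≤ C) :
    Filter.Tendsto (fun t => K * t ^ m * v t * w t) Filter.atTop (nhds 0) := by
  obtain ⟨Cv, hCv⟩ := hv (m + 1)
  obtain ⟨Cw, hCw⟩ := hw
  have hCw0 : 0 ≤ Cw := le_trans (abs_nonneg _) (hCw 0 le_rfl)
  apply squeeze_zero_norm' (a := fun t : ℝ => |K| * Cv * Cw / t)
  · filter_upwards [Filter.eventually_ge_atTop (1 : ℝ)] with t ht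
    have ht0 : (0 : ℝ) < t := lt_of_lt_of_le one_pos ht
    rw [Real.norm_eq_abs, le_div_iff₀ ht0]
    have h1 : t ^ (m + 1) * |v t| ≤ Cv := hCv t ht0.le
    have h1' : (0:ℝ) ≤ t ^ (m + 1) * |v t| := by positivity
    have h2 : |w t| ≤ Cw := hCw t ht0.le
    have key : |K * t ^ m * v t * w t| * t = |K| * ((t ^ (m + 1) * |v t|) * |w t|) := by
      rw [abs_mul, abs_mul, abs_mul, abs_of_nonneg (pow_nonneg ht0.le m)]
      ring
    rw [key]
    have : (t ^ (m + 1) * |v t|) * |w t| ≤ Cv * Cw :=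
      mul_le_mul h1 h2 (abs_nonneg _) (le_trans h1' h1)
    calc |K| * ((t ^ (m + 1) * |v t|) * |w t|) ≤ |K| * (Cv * Cw) :=
          mul_le_mul_of_nonneg_left this (abs_nonneg _)
      _ = |K| * Cv * Cw := by ring
  · exact Filter.Tendsto.div_atTop tendsto_const_nhds Filter.tendsto_id

lemma aux_integrable (K : ℝ) (m : ℕ) (v w : ℝ → ℝ) (hvc : Continuous v) (hwc : Continuous w)
    (hv : ∀ k : ℕ, ∃ C, ∀ t : ℝ, 0 ≤ t → t ^ k * |v t| ≤ C)
    (hw : ∃ C, ∀ t : ℝ, 0 ≤ t → |w t| ≤ C) :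
    IntegrableOn (fun t => K * t ^ m * v t * w t) (Set.Ioi (0:ℝ)) := by
  obtain ⟨C0, hC0⟩ := hv m
  obtain ⟨C2, hC2⟩ := hv (m + 2)
  obtain ⟨Cw, hCw⟩ := hw
  have hint : IntegrableOn (fun t : ℝ => (|K| * ((C0 + C2) * Cw)) * (1 + t ^ 2)⁻¹)
      (Set.Ioi (0:ℝ)) := (integrable_inv_one_add_sq.const_mul _).integrableOn
  have hfc : Continuous fun t : ℝ => K * t ^ m * v t * w t := by
    exact ((continuous_const.mul (continuous_pow m)).mul hvc).mul hwc
  apply Integrable.mono' hint hfc.aestronglyMeasurable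
  filter_upwards [ae_restrict_mem measurableSet_Ioi] with t (ht : (0:ℝ) < t)
  have hpos : (0 : ℝ) < 1 + t ^ 2 := by positivity
  rw [Real.norm_eq_abs, ← div_eq_mul_inv, le_div_iff₀ hpos]
  have b0 : t ^ m * |v t| ≤ C0 := hC0 t ht.le
  have b2 : t ^ (m + 2) * |v t| ≤ C2 := hC2 t ht.le
  have b0' : (0:ℝ) ≤ t ^ m * |v t| := by positivity
  have b2' : (0:ℝ) ≤ t ^ (m + 2) * |v t| := by positivity
  have hsum : t ^ m * |v t| + t ^ (m + 2) * |v t| ≤ C0 + C2 := add_le_add b0 b2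
  have key : |K * t ^ m * v t * w t| * (1 + t ^ 2)
      = |K| * ((t ^ m * |v t| + t ^ (m + 2) * |v t|) * |w t|) := by
    rw [abs_mul, abs_mul, abs_mul, abs_of_nonneg (pow_nonneg ht.le m)]
    ring
  rw [key]
  have : (t ^ m * |v t| + t ^ (m + 2) * |v t|) * |w t| ≤ (C0 + C2) * Cw :=
    mul_le_mul hsum (hCw t ht.le) (abs_nonneg _) (le_trans (by positivity) hsum)
  exact mul_le_mul_of_nonneg_left this (abs_nonneg _)

/-- For a normalized `(ξ,ξ,ξ²)`-eigenfunction `u`, `∫₀^∞ (C_ξ u) u dt = 0`. -/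
theorem Cxi_expectation_zero
    (ξ : ℝ) (u : ℝ → ℝ) (hu : IsEigen ξ ξ (ξ ^ 2) u)
    (hnorm : ∫ t in Set.Ioi (0 : ℝ), u t ^ 2 = 1) :
    ∫ t in Set.Ioi (0 : ℝ), Cxi ξ u t * u t = 0 := by
  obtain ⟨hsm, hdec, hode, hbc⟩ := hu
  have hbc0 : deriv u 0 = 0 := by rw [hbc]; ring
  have hd1 : Differentiable ℝ u := hsm.differentiable (by simp)
  have hsm' : ContDiff ℝ (⊤ : ℕ∞) (deriv u) := (contDiff_infty_iff_deriv.mp hsm).2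
  have hd2 : Differentiable ℝ (deriv u) := hsm'.differentiable (by simp)
  have hcu : Continuous u := hd1.continuous
  have hcu' : Continuous (deriv u) := hd2.continuous
  have hcu'' : Continuous (deriv (deriv u)) :=
    ((contDiff_infty_iff_deriv.mp hsm').2).continuous
  have hit2 : iteratedDeriv 2 u = deriv (deriv u) := by
    rw [show (2:ℕ) = 1 + 1 from rfl, iteratedDeriv_succ, iteratedDeriv_one]
  have d0 : ∀ k : ℕ, ∃ C, ∀ t : ℝ, 0 ≤ t → t ^ k * |u t| ≤ C := by
    intro k; obtain ⟨C, hC⟩ := hdec 0 k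
    exact ⟨C, fun t ht => by simpa [abs_of_nonneg ht, iteratedDeriv_zero] using hC t ht⟩
  have d1 : ∀ k : ℕ, ∃ C, ∀ t : ℝ, 0 ≤ t → t ^ k * |deriv u t| ≤ C := by
    intro k; obtain ⟨C, hC⟩ := hdec 1 k
    exact ⟨C, fun t ht => by simpa [abs_of_nonneg ht, iteratedDeriv_one] using hC t ht⟩
  have d2 : ∀ k : ℕ, ∃ C, ∀ t : ℝ, 0 ≤ t → t ^ k * |deriv (deriv u) t| ≤ C := by
    intro k; obtain ⟨C, hC⟩ := hdec 2 k
    exact ⟨C, fun t ht => by simpa [abs_of_nonneg ht, hit2] using hC t ht⟩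
  have hw0 : ∃ C, ∀ t : ℝ, 0 ≤ t → |u t| ≤ C := by
    obtain ⟨C, hC⟩ := d0 0; exact ⟨C, fun t ht => by simpa using hC t ht⟩
  have hw1 : ∃ C, ∀ t : ℝ, 0 ≤ t → |deriv u t| ≤ C := by
    obtain ⟨C, hC⟩ := d1 0; exact ⟨C, fun t ht => by simpa using hC t ht⟩
  -- G(0) = 0
  have hG0 : Gaux ξ u 0 = 0 := by
    simp only [Gaux, hbc0]
    norm_num
  -- continuity of G
  have hGcont : Continuous (Gaux ξ u) := by
    unfold Gaux
    fun_prop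
  -- derivative of G
  have hGderiv : ∀ t ∈ Set.Ioi (0:ℝ), HasDerivAt (Gaux ξ u) (Cxi ξ u t * u t) t := by
    intro t ht
    have ht0 : (0:ℝ) ≤ t := le_of_lt ht
    have HU : HasDerivAt u (deriv u t) t := (hd1 t).hasDerivAt
    have HU' : HasDerivAt (deriv u) (deriv (deriv u) t) t := (hd2 t).hasDerivAt
    have h1 : HasDerivAt (fun s : ℝ => s^2 + ξ*s - 2) (2*t + ξ) t := by
      have := ((hasDerivAt_pow 2 t).add ((hasDerivAt_id t).const_mul ξ)).sub_const (2:ℝ)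
      exact this.congr_deriv (by norm_num)
    have h2 : HasDerivAt (fun s : ℝ => s^2 - 2*ξ*s + 1) (2*t - 2*ξ) t := by
      have := ((hasDerivAt_pow 2 t).sub ((hasDerivAt_id t).const_mul (2*ξ))).add_const (1:ℝ)
      exact this.congr_deriv (by norm_num)
    have hA : HasDerivAt (fun s : ℝ => -2/3 - (s^2 + ξ*s - 2) * (s^2 - 2*ξ*s + 1)/3)
        (-(((2*t + ξ)*(t^2 - 2*ξ*t + 1) + (t^2 + ξ*t - 2)*(2*t - 2*ξ))/3)) t := by
      have := ((h1.mul h2).div_const 3).const_sub (-2/3)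
      exact this.congr_deriv (by ring)
    have hB : HasDerivAt (fun s : ℝ => -(2*s + ξ)/3) (-2/3) t := by
      have := ((((hasDerivAt_id t).const_mul (2:ℝ)).add_const ξ).neg).div_const 3
      exact this.congr_deriv (by ring)
    have hC : HasDerivAt (fun s : ℝ => (s^2 + ξ*s - 2)/3) ((2*t + ξ)/3) t := h1.div_const 3
    have hG1 := hA.mul (HU.pow 2)
    have hG2 := hB.mul (HU.mul HU')
    have hG3 := hC.mul (HU'.pow 2)
    have hfin := (hG1.add hG2).add hG3
    have hodet : deriv (deriv u) t = ((ξ - t)^2 + 1) * u t - ξ^2 * u t := by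
      have := hode t ht0; linarith
    refine hfin.congr_deriv ?_
    simp only [Cxi]
    rw [hodet]
    push_cast
    simp only [Pi.pow_apply, Pi.mul_apply]
    ring
  -- tendsto of G at infinity
  have hGtop : Filter.Tendsto (Gaux ξ u) Filter.atTop (nhds 0) := by
    have H := ((((((((aux_tendsto (-1/3) 4 u u d0 hw0).add
      (aux_tendsto (ξ/3) 3 u u d0 hw0)).add
      (aux_tendsto ((1+2*ξ^2)/3) 2 u u d0 hw0)).add
      (aux_tendsto (-5*ξ/3) 1 u u d0 hw0)).add
      (aux_tendsto (-2/3) 1 u (deriv u) d0 hw1)).add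
      (aux_tendsto (-ξ/3) 0 u (deriv u) d0 hw1)).add
      (aux_tendsto (1/3) 2 (deriv u) (deriv u) d1 hw1)).add
      (aux_tendsto (ξ/3) 1 (deriv u) (deriv u) d1 hw1)).add
      (aux_tendsto (-2/3) 0 (deriv u) (deriv u) d1 hw1)
    have heq : Gaux ξ u = fun t =>
        ((((((((-1/3 * t ^ 4 * u t * u t + ξ/3 * t ^ 3 * u t * u t) +
        (1+2*ξ^2)/3 * t ^ 2 * u t * u t) + -5*ξ/3 * t ^ 1 * u t * u t) +
        -2/3 * t ^ 1 * u t * deriv u t) + -ξ/3 * t ^ 0 * u t * deriv u t) +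
        1/3 * t ^ 2 * deriv u t * deriv u t) + ξ/3 * t ^ 1 * deriv u t * deriv u t) +
        -2/3 * t ^ 0 * deriv u t * deriv u t) := by
      funext t; simp only [Gaux]; ring
    rw [heq]
    simpa using H
  -- integrability of the integrand
  have hint : IntegrableOn (fun t => Cxi ξ u t * u t) (Set.Ioi (0:ℝ)) := by
    have H := ((((aux_integrable (-2) 1 (deriv (deriv u)) u hcu'' hcu d2 hw0).add
      (aux_integrable (-2) 0 (deriv u) u hcu' hcu d1 hw0)).add
      (aux_integrable (2*ξ^2+2) 1 u u hcu hcu d0 hw0)).add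
      (aux_integrable (-2*ξ) 0 u u hcu hcu d0 hw0)).add
      (aux_integrable (-2*ξ) 2 u u hcu hcu d0 hw0)
    have heq : (fun t => Cxi ξ u t * u t) = fun t =>
        ((((-2) * t ^ 1 * deriv (deriv u) t * u t + (-2) * t ^ 0 * deriv u t * u t) +
        (2*ξ^2+2) * t ^ 1 * u t * u t) + (-2*ξ) * t ^ 0 * u t * u t) +
        (-2*ξ) * t ^ 2 * u t * u t := by
      funext t; simp only [Cxi]; ring
    rw [heq]
    exact H
  have := integral_Ioi_of_hasDerivAt_of_tendsto
    (hGcont.continuousWithinAt) hGderiv hint hGtop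
  rw [this, hG0, sub_zero]
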